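/- Let n ≥ 3 and let T = (t_{i,j}) be a symmetric n×n real matrix with all entries positive such that t_{i,i} ≥ Σ_{j≠i} t_{i,j} for every row i. Then T is positive definite. -/

import Mathlib

open Finset Matrix

theorem stmt_2 {n : ℕ} (hn : 3 ≤ n) (T : Matrix (Fin n) (Fin n) ℝ)
    (hsymm : T.IsSymm)
    (hpos : ∀ i j, 0 < T i j)
    (hdom : ∀ i, ∑ j ∈ Finset.univ.erase i, T i j ≤ T i i) :
    T.PosDef := by
  have hsy : ∀ i j, T j i = T i j := fun i j => hsymm.apply i j
  constructor
  · rw [Matrix.IsHermitian, Matrix.conjTranspose]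
    ext i j; simpa using hsymm.apply i j
  intro x hx
  -- the quadratic form
  have hqf : dotProduct (star x) (T *ᵥ x) = ∑ i, ∑ j, T i j * x i * x j := by
    simp [dotProduct, Matrix.mulVec, Finset.mul_sum]
    congr 1; ext i; congr 1; ext j; ring
  set B := ∑ i, ∑ j, T i j * x i * x j with hB
  set S := ∑ i, ∑ j ∈ Finset.univ.erase i, T i j * (x i + x j) ^ 2 with hS
  -- key identity
  have hswap : (∑ i, ∑ j, T i j * x j ^ 2) = ∑ i, ∑ j, T i j * x i ^ 2 := by
    rw [Finset.sum_comm]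
    refine Finset.sum_congr rfl fun j _ => Finset.sum_congr rfl fun i _ => ?_
    rw [hsy i j]
  have hA : (∑ i, ∑ j, T i j * (x i + x j) ^ 2)
      = 2 * ∑ i, (∑ j, T i j) * x i ^ 2 + 2 * B := by
    have expand : (∑ i, ∑ j, T i j * (x i + x j) ^ 2)
        = (∑ i, ∑ j, T i j * x i ^ 2) + 2 * (∑ i, ∑ j, T i j * x i * x j)
          + (∑ i, ∑ j, T i j * x j ^ 2) := by
      simp_rw [Finset.mul_sum, ← Finset.sum_add_distrib]
      exact Finset.sum_congr rfl fun i _ => Finset.sum_congr rfl fun j _ => by ring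
    rw [expand, hswap, ← hB]
    simp_rw [Finset.sum_mul]
    ring
  have key : B = (∑ i, (T i i - ∑ j ∈ Finset.univ.erase i, T i j) * x i ^ 2) + S / 2 := by
    have hSe : S = (∑ i, ∑ j, T i j * (x i + x j) ^ 2) - ∑ i, 4 * T i i * x i ^ 2 := by
      rw [hS, ← Finset.sum_sub_distrib]
      refine Finset.sum_congr rfl fun i _ => ?_
      rw [Finset.sum_erase_eq_sub (Finset.mem_univ i)]
      ring
    have hde : ∀ i, (T i i - ∑ j ∈ Finset.univ.erase i, T i j) * x i ^ 2
        = 2 * T i i * x i ^ 2 - (∑ j, T i j) * x i ^ 2 := by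
      intro i
      rw [Finset.sum_erase_eq_sub (Finset.mem_univ i)]
      ring
    rw [Finset.sum_congr rfl fun i _ => hde i, hSe, hA]
    rw [Finset.sum_sub_distrib]
    have h4 : (∑ i, 4 * T i i * x i ^ 2) = 2 * ∑ i, 2 * T i i * x i ^ 2 := by
      rw [Finset.mul_sum]
      exact Finset.sum_congr rfl fun i _ => by ring
    rw [h4]
    ring
  -- nonnegativity pieces
  have hd : ∀ i, 0 ≤ (T i i - ∑ j ∈ Finset.univ.erase i, T i j) * x i ^ 2 := by
    intro i
    exact mul_nonneg (by linarith [hdom i]) (sq_nonneg _)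
  have hterm : ∀ i j, 0 ≤ T i j * (x i + x j) ^ 2 := fun i j =>
    mul_nonneg (hpos i j).le (sq_nonneg _)
  -- find a pair a ≠ b with x a + x b ≠ 0
  obtain ⟨i, hxi⟩ := Finsupp.ne_iff.mp hx
  have h1n : 1 < n := by omega
  obtain ⟨j, hji⟩ := Fintype.exists_ne_of_one_lt_card (by simpa using h1n) i
  obtain ⟨k, hk⟩ : ∃ k, k ∉ ({i, j} : Finset (Fin n)) := by
    by_contra h
    push_neg at h
    have hsub : (Finset.univ : Finset (Fin n)) ⊆ {i, j} := fun k _ => h k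
    have := Finset.card_le_card hsub
    have h2 : ({i, j} : Finset (Fin n)).card ≤ 2 := Finset.card_insert_le _ _ |>.trans (by simp)
    simp [Finset.card_univ] at this
    omega
  have hki : k ≠ i := by simp at hk; tauto
  have hkj : k ≠ j := by simp at hk; tauto
  obtain ⟨a, b, hab, hs⟩ : ∃ a b, a ≠ b ∧ x a + x b ≠ 0 := by
    by_cases h1 : x i + x j ≠ 0
    · exact ⟨i, j, hji.symm, h1⟩
    by_cases h2 : x i + x k ≠ 0
    · exact ⟨i, k, hki.symm, h2⟩
    push_neg at h1 h2
    refine ⟨j, k, hkj.symm, ?_⟩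
    have : x j + x k = -(2 * x i) := by linarith
    rw [this]
    simpa using hxi
  -- S bounded below by one positive term
  have hSpos : 0 < S := by
    have h1 : T a b * (x a + x b) ^ 2 ≤ ∑ j ∈ Finset.univ.erase a, T a j * (x a + x j) ^ 2 :=
      Finset.single_le_sum (fun c _ => hterm a c) (Finset.mem_erase.mpr ⟨hab.symm, Finset.mem_univ b⟩)
    have h2 : (∑ j ∈ Finset.univ.erase a, T a j * (x a + x j) ^ 2) ≤ S :=
      Finset.single_le_sum (f := fun i => ∑ j ∈ Finset.univ.erase i, T i j * (x i + x j) ^ 2)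
        (fun c _ => Finset.sum_nonneg fun d _ => hterm c d) (Finset.mem_univ a)
    have h0 : 0 < T a b * (x a + x b) ^ 2 :=
      mul_pos (hpos a b) (by positivity)
    linarith
  have hdsum : 0 ≤ ∑ i, (T i i - ∑ j ∈ Finset.univ.erase i, T i j) * x i ^ 2 :=
    Finset.sum_nonneg fun i _ => hd i
  have hgoal : (x.sum fun i xi => x.sum fun j xj => star xi * T i j * xj) = B := by
    rw [hB, Finsupp.sum_fintype _ _ (fun i => by simp)]
    refine Finset.sum_congr rfl fun i _ => ?_
    rw [Finsupp.sum_fintype _ _ (fun j => by simp)]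
    refine Finset.sum_congr rfl fun j _ => ?_
    simp only [star_trivial]; ring
  rw [hqf, ← hB] at *
  rw [hgoal, key]
  linarith
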